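/- Let H, F be Hilbert spaces, E : H → H* the Riesz map of a coercive symmetric bounded bilinear form a, N : F → H* bounded linear, and g ∈ H. Then V = 0 together with f = 0 solves: minimize ½ a(V − g, V − g) subject to E V = N f, if and only if ⟨N f', g⟩ = 0 for all f' ∈ F. -/

import Mathlib

private lemma quad_aux {A B : ℝ} (hA : 0 ≤ A)
    (key : ∀ t : ℝ, 0 ≤ t ^ 2 * A - 2 * t * B) : B = 0 := by
  rcases hA.eq_or_lt with heq | hpos
  · have h1 := key 1
    have h2 := key (-1)
    nlinarith
  · have h := key (B / A)
    have he : (B / A) ^ 2 * A - 2 * (B / A) * B = -(B ^ 2) / A := by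
      field_simp; ring
    rw [he] at h
    have h2 : 0 ≤ -(B ^ 2) := by
      have := mul_le_mul_of_nonneg_right h hpos.le
      rwa [zero_mul, div_mul_cancel₀ _ hpos.ne'] at this
    have : B ^ 2 = 0 := le_antisymm (by linarith) (sq_nonneg B)
    nlinarith [sq_nonneg B, this]

/-- Let `H, F` be Hilbert spaces, `a` a coercive, symmetric,
bounded bilinear form on `H` (with Riesz map `E`, so the constraint `E V = N f`
reads `a(V, ·) = ⟨N f, ·⟩`), `N : F → H*` bounded linear and `g ∈ H`. Then the
pair `(V, f) = (0, 0)` minimizes `½ a(V - g, V - g)` subject to `E V = N f` if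
and only if `⟨N f', g⟩ = 0` for all `f' ∈ F`. -/
theorem stationarity_characterization
    {H F : Type*}
    [NormedAddCommGroup H] [InnerProductSpace ℝ H] [CompleteSpace H]
    [NormedAddCommGroup F] [InnerProductSpace ℝ F] [CompleteSpace F]
    (a : H →ₗ[ℝ] H →ₗ[ℝ] ℝ)
    (hsym : ∀ v w, a v w = a w v)
    (hbdd : ∃ M : ℝ, ∀ v w, |a v w| ≤ M * ‖v‖ * ‖w‖)
    (c : ℝ) (hc : 0 < c) (hcoer : ∀ v, c * ‖v‖ ^ 2 ≤ a v v)
    (N : F →L[ℝ] (H →L[ℝ] ℝ))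
    (g : H) :
    (∀ (V : H) (f : F), (∀ w, a V w = N f w) →
        (1 / 2) * a ((0 : H) - g) ((0 : H) - g) ≤ (1 / 2) * a (V - g) (V - g)) ↔
      (∀ f' : F, N f' g = 0) := by
  obtain ⟨M, hM⟩ := hbdd
  -- expansion lemma
  have expand : ∀ (V : H), a (V - g) (V - g)
      = a V V - 2 * a V g + a g g := by
    intro V
    have h1 := hsym g V
    simp only [map_sub, LinearMap.sub_apply]
    ring_nf
    rw [h1]
    ring
  constructor
  · intro hmin f'
    -- build the continuous bilinear form
    let B : H →L[ℝ] H →L[ℝ] ℝ := LinearMap.mkContinuous₂ a M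
      (fun x y => by simpa [Real.norm_eq_abs] using hM x y)
    have hBa : ∀ v w, B v w = a v w := fun v w => rfl
    have hcoB : IsCoercive B := ⟨c, hc, fun u => by
      have := hcoer u
      rw [hBa]
      nlinarith [this]⟩
    set z := (InnerProductSpace.toDual ℝ H).symm (N f') with hzdef
    have hz : ∀ w, (inner ℝ z w : ℝ) = N f' w := fun w => by
      simp [hzdef]
    set V' := hcoB.continuousLinearEquivOfBilin.symm z with hV'def
    have hV' : ∀ w, a V' w = N f' w := by
      intro w
      rw [← hBa, ← hcoB.continuousLinearEquivOfBilin_apply V' w]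
      rw [hV'def, ContinuousLinearEquiv.apply_symm_apply]
      exact hz w
    have key : ∀ t : ℝ, 0 ≤ t ^ 2 * a V' V' - 2 * t * a V' g := by
      intro t
      have hconstr : ∀ w, a (t • V') w = N (t • f') w := by
        intro w
        rw [map_smul, map_smul]
        simp [LinearMap.smul_apply, hV' w]
      have h := hmin (t • V') (t • f') hconstr
      have e1 := expand (t • V')
      have e0 := expand 0
      have hs : a (t • V') (t • V') = t ^ 2 * a V' V' := by
        rw [map_smul]; simp [LinearMap.smul_apply, map_smul]; ring
      have hs2 : a (t • V') g = t * a V' g := by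
        rw [map_smul]; simp
      simp only [map_zero, LinearMap.zero_apply] at e0
      nlinarith [h, e1, e0, hs, hs2]
    -- conclude a V' g = 0
    have hA : 0 ≤ a V' V' := le_trans (by positivity) (hcoer V')
    have hB0 : a V' g = 0 := quad_aux hA key
    rw [← hV' g]
    exact hB0
  · intro horth V f hconstr
    have hVg : a V g = 0 := by rw [hconstr g]; exact horth f
    have e1 := expand V
    have e0 := expand 0
    simp only [map_zero, LinearMap.zero_apply] at e0
    have hA : 0 ≤ a V V := le_trans (by positivity) (hcoer V)
    nlinarith [e1, e0, hA, hVg]
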